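/- For every u = (u_0, …, u_{n−1}) ∈ 𝔽_q^n, the unique polynomial f of degree less than n satisfying f(α^j) = u_j for all 0 ≤ j ≤ n−1 is given by f = Σ_{i=0}^{n−1} (−u(α^{n−i})) x^i; equivalently, the inverse of the map (v_0,…,v_{n−1}) ↦ (v(1), v(α), …, v(α^{n−1})) sends (u_0,…,u_{n−1}) to the coefficient vector (−u(α^n), −u(α^{n−1}), …, −u(α)). -/

import Mathlib

open Polynomial

/-- the unique polynomial of degree `< n` interpolating `u` at the powers of
`α` is `f = ∑_{i=0}^{n-1} (-u(α^{n-i})) x^i`, where `u(β) = ∑_j u_j β^j`. -/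
theorem stmt_6 {F : Type*} [Field F] [Fintype F] (α : F)
    (n : ℕ) (hn : n = Fintype.card F - 1) (hα : orderOf α = n)
    (u : Fin n → F) :
    let f : Polynomial F := ∑ i ∈ Finset.range n,
      Polynomial.C (-(∑ j : Fin n, u j * (α ^ (n - i)) ^ (j : ℕ))) * Polynomial.X ^ i
    f.degree < (n : WithBot ℕ) ∧ ∀ i : Fin n, f.eval (α ^ (i : ℕ)) = u i := by
  intro f
  have hcard : 1 < Fintype.card F := Fintype.one_lt_card
  have hn1 : 0 < n := by omega
  have hαn : α ^ n = 1 := by rw [← hα]; exact pow_orderOf_eq_one α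
  have hα0 : α ≠ 0 := by
    intro h
    rw [h, zero_pow hn1.ne'] at hαn
    exact zero_ne_one hαn
  have hcast : (n : F) = -1 := by
    have h0 : ((Fintype.card F : ℕ) : F) = 0 := Nat.cast_card_eq_zero F
    have h1 : n + 1 = Fintype.card F := by omega
    have h2 := congrArg (Nat.cast : ℕ → F) h1
    push_cast at h2
    linear_combination h2 + h0
  have hf : f = ∑ i ∈ Finset.range n,
      Polynomial.C (-(∑ j : Fin n, u j * (α ^ (n - i)) ^ (j : ℕ))) * Polynomial.X ^ i := rfl
  constructor
  · rw [hf]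
    refine lt_of_le_of_lt (Polynomial.degree_sum_le _ _) ?_
    rw [Finset.sup_lt_iff (by exact_mod_cast WithBot.bot_lt_coe n)]
    intro i hi
    refine lt_of_le_of_lt (Polynomial.degree_C_mul_X_pow_le _ _) ?_
    exact_mod_cast Finset.mem_range.mp hi
  · intro i
    rw [hf]
    simp only [Polynomial.eval_finset_sum, Polynomial.eval_mul, Polynomial.eval_C,
      Polynomial.eval_pow, Polynomial.eval_X]
    have key : ∀ j : Fin n,
        ∑ k ∈ Finset.range n, (α ^ (n - k)) ^ (j : ℕ) * (α ^ (i : ℕ)) ^ k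
          = if j = i then (n : F) else 0 := by
      intro j
      have hterm : ∀ k ∈ Finset.range n,
          (α ^ (n - k)) ^ (j : ℕ) * (α ^ (i : ℕ)) ^ k
            = (α ^ (i : ℕ) * (α ^ (j : ℕ))⁻¹) ^ k := by
        intro k hk
        have hk' : k < n := Finset.mem_range.mp hk
        have h1 : α ^ (n - k) = (α ^ k)⁻¹ := by
          refine eq_inv_of_mul_eq_one_left ?_
          rw [← pow_add]
          rw [show n - k + k = n by omega]
          exact hαn
        rw [h1, mul_pow]
        rw [show ((α ^ k)⁻¹) ^ (j : ℕ) = ((α ^ (j : ℕ))⁻¹) ^ k by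
          rw [← inv_pow, ← inv_pow, ← pow_mul, ← pow_mul, Nat.mul_comm]]
        ring
      rw [Finset.sum_congr rfl hterm]
      set r : F := α ^ (i : ℕ) * (α ^ (j : ℕ))⁻¹ with hr
      by_cases hji : j = i
      · subst hji
        have : r = 1 := mul_inv_cancel₀ (pow_ne_zero _ hα0)
        simp [this]
      · have hrne : r ≠ 1 := by
          intro h
          have hij : α ^ (j : ℕ) = α ^ (i : ℕ) := by
            rw [hr] at h
            exact ((mul_inv_eq_one₀ (pow_ne_zero _ hα0)).mp h).symm
          have := pow_injOn_Iio_orderOf (by simp [hα, j.isLt]) (by simp [hα, i.isLt]) hij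
          exact hji (Fin.ext this)
        have hi1 : (α ^ (i : ℕ)) ^ n = 1 := by
          rw [← pow_mul, Nat.mul_comm, pow_mul, hαn, one_pow]
        have hj1 : (α ^ (j : ℕ)) ^ n = 1 := by
          rw [← pow_mul, Nat.mul_comm, pow_mul, hαn, one_pow]
        have hrn : r ^ n = 1 := by
          rw [hr, mul_pow, inv_pow, hi1, hj1, inv_one, mul_one]
        simp [if_neg hji, geom_sum_eq hrne, hrn]
    calc ∑ k ∈ Finset.range n, (-∑ j : Fin n, u j * (α ^ (n - k)) ^ (j:ℕ)) * (α ^ (i:ℕ)) ^ k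
        = ∑ k ∈ Finset.range n, ∑ j : Fin n,
            -(u j * ((α ^ (n - k)) ^ (j:ℕ) * (α ^ (i:ℕ)) ^ k)) := by
          refine Finset.sum_congr rfl fun k _ => ?_
          rw [neg_mul, Finset.sum_mul, ← Finset.sum_neg_distrib]
          exact Finset.sum_congr rfl fun j _ => by ring
      _ = ∑ j : Fin n, ∑ k ∈ Finset.range n,
            -(u j * ((α ^ (n - k)) ^ (j:ℕ) * (α ^ (i:ℕ)) ^ k)) := Finset.sum_comm
      _ = ∑ j : Fin n, -(u j * ∑ k ∈ Finset.range n,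
            (α ^ (n - k)) ^ (j:ℕ) * (α ^ (i:ℕ)) ^ k) := by
          refine Finset.sum_congr rfl fun j _ => ?_
          rw [Finset.mul_sum, ← Finset.sum_neg_distrib]
      _ = u i := by
          simp only [key]
          rw [Fintype.sum_eq_single i (by intro j hj; simp [if_neg hj])]
          rw [if_pos rfl, hcast]
          ring
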